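/- Suppose there exists a classical MDS code C ⊆ Σ^n over an alphabet Σ of size q with minimum Hamming distance d and size q^{n-d+1}, and suppose there exists a connected simple graph G on n vertices with m edges, all vertex degrees even, and girth at least n-d+1. Then there exists an MDS (m, m-n+d+1)_q-symbol-pair code. Concretely, if x_0 e_1 x_1 e_2 ... e_m x_m (with x_m = x_0) is a closed eulerian trail of G with vertex set Z_n, then C' = {(u_{x_0}, u_{x_1}, ..., u_{x_{m-1}}) : u ∈ C} has size q^{n-d+1} and minimum pair-distance at least m-n+d+1. -/

import Mathlib

/-- The (cyclic) pair-distance between two vectors of length `n`,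
with coordinates indexed by `ZMod n`. -/
noncomputable def pairDist {n : ℕ} {σ : Type*} (u v : ZMod n → σ) : ℕ :=
  {i : ZMod n | (u i, u (i + 1)) ≠ (v i, v (i + 1))}.ncard

/-- The Hamming distance between two vectors of length `n`,
with coordinates indexed by `ZMod n`. -/
noncomputable def hamDist {n : ℕ} {σ : Type*} (u v : ZMod n → σ) : ℕ :=
  {i : ZMod n | u i ≠ v i}.ncard
open SimpleGraph Walk

section Euler
variable {V : Type*} [Fintype V] [DecidableEq V] {G : SimpleGraph V}

lemma trail_length_le [DecidableRel G.Adj] {x y : V} {p : G.Walk x y} (hp : p.IsTrail) :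
    p.length ≤ G.edgeFinset.card := by
  classical
  rw [← p.length_edges, ← List.toFinset_card_of_nodup hp.edges_nodup]
  exact Finset.card_le_card fun e he => by
    simpa using p.edges_subset_edgeSet (List.mem_toFinset.mp he)

lemma exists_succ_trail [DecidableRel G.Adj] {x y : V} {p : G.Walk x y} (hp : p.IsTrail)
    (hodd : ¬ Even (p.edges.countP fun e => y ∈ e)) (hdeg : Even (G.degree y)) :
    ∃ z, G.Adj y z ∧ s(y, z) ∉ p.edges := by
  classical
  by_contra hc
  push_neg at hc
  apply hodd
  have hfilter : (p.edges.filter fun e => y ∈ e).toFinset = G.incidenceFinset y := by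
    ext e
    simp only [List.mem_toFinset, List.mem_filter, mem_incidenceFinset, decide_eq_true_eq]
    constructor
    · rintro ⟨he, hy⟩
      exact ⟨p.edges_subset_edgeSet he, hy⟩
    · rintro he
      have hz : G.Adj y (G.otherVertexOfIncident he) := G.incidence_other_prop he
      have hspec : s(y, G.otherVertexOfIncident he) = e := Sym2.other_spec' he.2
      exact ⟨by rw [← hspec]; exact hc _ hz, he.2⟩
  have : (p.edges.countP fun e => y ∈ e) = G.degree y := by
    rw [List.countP_eq_length_filter,
      ← List.toFinset_card_of_nodup (hp.edges_nodup.filter _), hfilter,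
      card_incidenceFinset_eq_degree]
  rw [this]
  exact hdeg

lemma isTrail_concat {x y z : V} {p : G.Walk x y} (hp : p.IsTrail) (h : G.Adj y z)
    (hnew : s(y, z) ∉ p.edges) : (p.concat h).IsTrail := by
  rw [isTrail_def, edges_concat, List.concat_eq_append, List.nodup_append]
  exact ⟨hp.edges_nodup, List.nodup_singleton _, fun e he => by
    simp only [List.mem_singleton]
    rintro _ rfl rfl; exact hnew he⟩

lemma exists_closed_trail_from [DecidableRel G.Adj]
    (hdeg : ∀ y, Even (G.degree y)) {x z : V} (hxz : G.Adj x z) :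
    ∃ q : G.Walk x x, q.IsTrail ∧ 1 ≤ q.length := by
  classical
  set K := G.edgeFinset.card with hK
  set P : ℕ → Prop := fun k => ∃ y, ∃ q : G.Walk x y, q.IsTrail ∧ q.length = k with hP
  have hP1 : P 1 := ⟨z, Walk.cons hxz Walk.nil, by simp [isTrail_def], by simp⟩
  have h1K : 1 ≤ K := by
    obtain ⟨y, q, hq, hlen⟩ := hP1
    calc 1 = q.length := hlen.symm
    _ ≤ K := trail_length_le hq
  have hPk : P (Nat.findGreatest P K) := Nat.findGreatest_spec h1K hP1
  have hk1 : 1 ≤ Nat.findGreatest P K := Nat.le_findGreatest h1K hP1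
  obtain ⟨y, q, hq, hlen⟩ := hPk
  by_cases hxy : y = x
  · subst hxy
    exact ⟨q, hq, hlen ▸ hk1⟩
  · exfalso
    have hodd : ¬ Even (q.edges.countP fun e => y ∈ e) := by
      rw [hq.even_countP_edges_iff y]
      exact fun hcon => (hcon fun h => hxy h.symm).2 rfl
    obtain ⟨w, hadj, hnew⟩ := exists_succ_trail hq hodd (hdeg y)
    have htr := isTrail_concat hq hadj hnew
    have hle : q.length + 1 ≤ K := by
      have := trail_length_le htr
      rwa [length_concat] at this
    have hPnew : P (q.length + 1) := ⟨w, q.concat hadj, htr, length_concat _ _⟩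
    exact Nat.findGreatest_is_greatest (by omega) hle hPnew

lemma exists_incident_support {v : V} (p : G.Walk v v) {a b : V} (w : G.Walk a b)
    (hb : b ∈ p.support) :
    (∃ z, G.Adj a z ∧ s(a, z) ∉ p.edges) →
      ∃ x z, x ∈ p.support ∧ G.Adj x z ∧ s(x, z) ∉ p.edges := by
  induction w with
  | nil => rintro ⟨z, h1, h2⟩; exact ⟨_, z, hb, h1, h2⟩
  | @cons a c b h w ih =>
    intro ha
    by_cases hs : a ∈ p.support
    · exact ⟨a, ha.choose, hs, ha.choose_spec⟩
    · apply ih hb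
      refine ⟨a, h.symm, fun hmem => hs ?_⟩
      rw [Sym2.eq_swap] at hmem
      exact p.fst_mem_support_of_mem_edges hmem

end Euler

section Euler2
variable {V : Type*} [Fintype V] [DecidableEq V] {G : SimpleGraph V}

lemma degree_eq_ncard [DecidableRel G.Adj] (y : V) :
    G.degree y = (G.neighborSet y).ncard := by
  simp [SimpleGraph.degree, SimpleGraph.neighborFinset, Set.ncard_eq_toFinset_card']

lemma countP_edges_eq [DecidableRel G.Adj] {x' y' : V} {p : G.Walk x' y'} (hp : p.IsTrail)
    (y : V) :
    (p.edges.countP fun e => y ∈ e)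
      = ((G.neighborFinset y).filter fun z => s(y, z) ∈ p.edges).card := by
  classical
  rw [List.countP_eq_length_filter, ← List.toFinset_card_of_nodup (hp.edges_nodup.filter _)]
  refine Finset.card_bij' (fun e he => Sym2.Mem.other'
      (by simp only [List.mem_toFinset, List.mem_filter, decide_eq_true_eq] at he
          exact he.2 : y ∈ e))
    (fun z _ => s(y, z)) ?_ ?_ ?_ ?_
  · intro e he
    simp only [List.mem_toFinset, List.mem_filter, decide_eq_true_eq] at he
    obtain ⟨he1, he2⟩ := he
    have hspec := Sym2.other_spec' (show y ∈ e from he2)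
    simp only [Finset.mem_filter, mem_neighborFinset]
    constructor
    · have : e ∈ G.edgeSet := p.edges_subset_edgeSet he1
      rw [← hspec] at this
      exact this
    · rw [hspec]; exact he1
  · intro z hz
    simp only [Finset.mem_filter, mem_neighborFinset] at hz
    simp only [List.mem_toFinset, List.mem_filter, decide_eq_true_eq]
    exact ⟨hz.2, Sym2.mem_mk_left _ _⟩
  · intro e he
    exact Sym2.other_spec' _
  · intro z hz
    have : y ∈ s(y, z) := Sym2.mem_mk_left _ _
    exact Sym2.congr_right.mp (Sym2.other_spec' this)

lemma even_ncard_nbhd_deleteEdges {v : V} {p : G.Walk v v} (hp : p.IsTrail)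
    (hdeg : ∀ x, Even ((G.neighborSet x).ncard)) (y : V) :
    Even (((G.deleteEdges {e | e ∈ p.edges}).neighborSet y).ncard) := by
  classical
  set G' := G.deleteEdges {e | e ∈ p.edges} with hG'
  have hB : (G'.neighborSet y).toFinset
      = (G.neighborFinset y).filter fun z => s(y, z) ∉ p.edges := by
    ext z
    simp [hG', Set.mem_toFinset, deleteEdges_adj]
  have hsplit : ((G.neighborFinset y).filter fun z => s(y, z) ∈ p.edges).card
      + ((G.neighborFinset y).filter fun z => ¬ s(y, z) ∈ p.edges).card
      = (G.neighborFinset y).card := by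
    simpa using Finset.card_filter_add_card_filter_not
      (s := G.neighborFinset y) (p := fun z => s(y, z) ∈ p.edges)
  have hcount : Even ((G.neighborFinset y).filter fun z => s(y, z) ∈ p.edges).card := by
    rw [← countP_edges_eq hp y]
    exact (hp.even_countP_edges_iff y).mpr fun h => absurd rfl h
  have hA : Even (G.neighborFinset y).card := by
    have := hdeg y
    rwa [← degree_eq_ncard y] at this
  have : Even ((G.neighborFinset y).filter fun z => ¬ s(y, z) ∈ p.edges).card := by
    rcases hcount with ⟨c, hc⟩
    rcases hA with ⟨a, ha⟩
    exact ⟨a - c, by omega⟩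
  rw [Set.ncard_eq_toFinset_card', hB]
  exact this

theorem exists_eulerian [Nonempty V] [DecidableRel G.Adj] (hconn : G.Connected)
    (hdeg : ∀ y, Even ((G.neighborSet y).ncard)) :
    ∃ (x : V) (p : G.Walk x x), p.IsEulerian := by
  classical
  set K := G.edgeFinset.card with hK
  set P : ℕ → Prop := fun k => ∃ x, ∃ p : G.Walk x x, p.IsTrail ∧ p.length = k with hPdef
  have hP0 : P 0 := ⟨Classical.arbitrary V, Walk.nil, Walk.IsTrail.nil, rfl⟩
  have hPk : P (Nat.findGreatest P K) := Nat.findGreatest_spec (Nat.zero_le K) hP0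
  obtain ⟨v, p, hp, hlen⟩ := hPk
  refine ⟨v, p, hp.isEulerian_of_forall_mem fun e he => ?_⟩
  by_contra hnot
  obtain ⟨⟨a, b⟩, rfl⟩ := e.exists_rep
  have hadj : G.Adj a b := he
  obtain ⟨w⟩ := hconn.preconnected a v
  obtain ⟨x, z, hxs, hxz, hnew⟩ :=
    exists_incident_support p w p.end_mem_support ⟨b, hadj, hnot⟩
  set G' := G.deleteEdges {e | e ∈ p.edges} with hG'
  letI : DecidableRel G'.Adj := Classical.decRel _
  have hdeg' : ∀ y, Even (G'.degree y) := fun y => by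
    rw [degree_eq_ncard]
    exact even_ncard_nbhd_deleteEdges hp hdeg y
  have hxz' : G'.Adj x z := by
    rw [hG', deleteEdges_adj]
    exact ⟨hxz, hnew⟩
  obtain ⟨q, hq, hq1⟩ := exists_closed_trail_from hdeg' hxz'
  have hsub : ∀ e ∈ q.edges, e ∈ G.edgeSet := fun e he' =>
    edgeSet_mono (deleteEdges_le _) (q.edges_subset_edgeSet he')
  set q' := q.transfer G hsub with hq'def
  have hq'edges : q'.edges = q.edges := q.edges_transfer hsub
  have hdisj : ∀ e ∈ q.edges, e ∉ p.edges := fun e he' => by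
    have h2 := q.edges_subset_edgeSet he'
    rw [hG', edgeSet_deleteEdges] at h2
    exact h2.2
  set r := (p.rotate x hxs).append q' with hrdef
  have hr : r.IsTrail := by
    rw [isTrail_def, hrdef, edges_append]
    apply List.Nodup.append
    · exact ((p.rotate_edges x hxs).nodup_iff).mpr hp.edges_nodup
    · rw [hq'edges]; exact hq.edges_nodup
    · intro e he1 he2
      rw [hq'edges] at he2
      exact hdisj e he2 ((p.rotate_edges x hxs).mem_iff.mp he1)
  have hrlen : r.length = p.length + q.length := by
    rw [hrdef, length_append]
    congr 1
    · rw [← length_edges, ← length_edges, (p.rotate_edges x hxs).perm.length_eq]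
    · rw [hq'def, length_transfer]
  have hPr : P r.length := ⟨x, r, hr, rfl⟩
  have hrK : r.length ≤ K := trail_length_le hr
  exact absurd hPr (Nat.findGreatest_is_greatest (by omega) hrK)

end Euler2
open SimpleGraph Walk

section Forest
variable {V : Type*} [Fintype V] [DecidableEq V]

lemma forest_edge_bound : ∀ (k : ℕ) (H : SimpleGraph V), H.IsAcyclic → ∀ S : Finset V,
    H.edgeSet.ncard = k → (∀ e ∈ H.edgeSet, ∀ x ∈ e, x ∈ S) → S.Nonempty →
    k + 1 ≤ S.card := by
  intro k
  induction k using Nat.strong_induction_on with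
  | _ k ih =>
  intro H hac S hcard hsub hne
  rcases Nat.eq_zero_or_pos k with rfl | hk
  · simpa using hne.card_pos
  classical
  have hEne : H.edgeSet.Nonempty := by
    rw [← Set.ncard_pos H.edgeSet.toFinite, hcard]; exact hk
  obtain ⟨e, he⟩ := hEne
  obtain ⟨⟨a, b⟩, rfl⟩ := e.exists_rep
  have hab : H.Adj a b := he
  have hbr : H.IsBridge s(a, b) := isAcyclic_iff_forall_adj_isBridge.mp hac hab
  set H' := H.deleteEdges {s(a, b)} with hH'
  have hnr : ¬ H'.Reachable a b := hbr
  set R : Set V := {x | H'.Reachable a x} with hR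
  have hrespect : ∀ {x y}, H'.Adj x y → (x ∈ R ↔ y ∈ R) := by
    intro x y hxy
    constructor
    · exact fun h => h.trans hxy.reachable
    · exact fun h => h.trans hxy.symm.reachable
  set H₁ : SimpleGraph V :=
    { Adj := fun x y => H'.Adj x y ∧ x ∈ R ∧ y ∈ R
      symm := ⟨fun x y h => ⟨h.1.symm, h.2.2, h.2.1⟩⟩
      loopless := ⟨fun x h => H'.loopless.irrefl x h.1⟩ } with hH₁
  set H₂ : SimpleGraph V :=
    { Adj := fun x y => H'.Adj x y ∧ x ∉ R ∧ y ∉ R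
      symm := ⟨fun x y h => ⟨h.1.symm, h.2.2, h.2.1⟩⟩
      loopless := ⟨fun x h => H'.loopless.irrefl x h.1⟩ } with hH₂
  have hle1 : H₁ ≤ H := fun x y h => (deleteEdges_le _ h.1 : H.Adj x y)
  have hle2 : H₂ ≤ H := fun x y h => (deleteEdges_le _ h.1 : H.Adj x y)
  have hac1 : H₁.IsAcyclic := fun v c hc => hac (c.mapLe hle1) (hc.mapLe hle1)
  have hac2 : H₂.IsAcyclic := fun v c hc => hac (c.mapLe hle2) (hc.mapLe hle2)
  have hsplitE : H'.edgeSet = H₁.edgeSet ∪ H₂.edgeSet := by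
    ext e'
    induction e' using Sym2.ind with
    | _ x y =>
      simp only [Set.mem_union, SimpleGraph.mem_edgeSet, hH₁, hH₂]
      constructor
      · intro h
        by_cases hx : x ∈ R
        · exact Or.inl ⟨h, hx, (hrespect h).mp hx⟩
        · exact Or.inr ⟨h, hx, fun hy => hx ((hrespect h).mpr hy)⟩
      · rintro (⟨h, -⟩ | ⟨h, -⟩) <;> exact h
  have hE : H.edgeSet = insert s(a, b) (H₁.edgeSet ∪ H₂.edgeSet) := by
    rw [← hsplitE, hH', edgeSet_deleteEdges]
    rw [Set.insert_diff_singleton, Set.insert_eq_of_mem he]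
  have hnotmem : s(a, b) ∉ H₁.edgeSet ∪ H₂.edgeSet := by
    rw [← hsplitE, hH', edgeSet_deleteEdges]
    simp
  have hdisjE : Disjoint H₁.edgeSet H₂.edgeSet := by
    rw [Set.disjoint_left]
    intro e' h1 h2
    induction e' using Sym2.ind with
    | _ x y => exact ((mem_edgeSet _).mp h2).2.1 ((mem_edgeSet _).mp h1).2.1
  set k₁ := H₁.edgeSet.ncard with hk₁
  set k₂ := H₂.edgeSet.ncard with hk₂
  have hksum : k = k₁ + k₂ + 1 := by
    rw [← hcard, hE, Set.ncard_insert_of_notMem hnotmem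
      ((H₁.edgeSet ∪ H₂.edgeSet).toFinite),
      Set.ncard_union_eq hdisjE H₁.edgeSet.toFinite H₂.edgeSet.toFinite]
  set S₁ := S.filter (· ∈ R) with hS₁
  set S₂ := S.filter (· ∉ R) with hS₂
  have hScard : S₁.card + S₂.card = S.card := Finset.card_filter_add_card_filter_not _
  have haS : a ∈ S₁ := by
    rw [hS₁, Finset.mem_filter]
    exact ⟨hsub _ he a (Sym2.mem_mk_left _ _), Reachable.refl a⟩
  have hbS : b ∈ S₂ := by
    rw [hS₂, Finset.mem_filter]
    exact ⟨hsub _ he b (Sym2.mem_mk_right _ _), hnr⟩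
  have hsub1 : ∀ e' ∈ H₁.edgeSet, ∀ x ∈ e', x ∈ S₁ := by
    intro e' he' x hx
    induction e' using Sym2.ind with
    | _ y z =>
      have h1 := (mem_edgeSet _).mp he'
      rw [hS₁, Finset.mem_filter]
      refine ⟨hsub _ (edgeSet_mono hle1 he') x hx, ?_⟩
      rcases Sym2.mem_iff.mp hx with rfl | rfl
      · exact h1.2.1
      · exact h1.2.2
  have hsub2 : ∀ e' ∈ H₂.edgeSet, ∀ x ∈ e', x ∈ S₂ := by
    intro e' he' x hx
    induction e' using Sym2.ind with
    | _ y z =>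
      have h1 := (mem_edgeSet _).mp he'
      rw [hS₂, Finset.mem_filter]
      refine ⟨hsub _ (edgeSet_mono hle2 he') x hx, ?_⟩
      rcases Sym2.mem_iff.mp hx with rfl | rfl
      · exact h1.2.1
      · exact h1.2.2
  have hb1 : k₁ + 1 ≤ S₁.card := ih k₁ (by omega) H₁ hac1 S₁ rfl hsub1 ⟨a, haS⟩
  have hb2 : k₂ + 1 ≤ S₂.card := ih k₂ (by omega) H₂ hac2 S₂ rfl hsub2 ⟨b, hbS⟩
  omega

end Forest
open SimpleGraph Walk

section Helpers
variable {V : Type*} {G : SimpleGraph V}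

lemma edges_getElem {a b : V} (p : G.Walk a b) :
    ∀ i : ℕ, ∀ hi : i < p.length,
      p.edges[i]'(by rwa [length_edges]) = s(p.getVert i, p.getVert (i + 1)) := by
  induction p with
  | nil => intro i hi; simp at hi
  | cons h q ihq =>
    intro i hi
    cases i with
    | zero => simp [getVert_cons_succ]
    | succ i =>
      rw [length_cons] at hi
      have := ihq i (by omega)
      simp only [edges_cons, getVert_cons_succ]
      rw [List.getElem_cons_succ]
      exact this

lemma exists_adj_of_connected [Nontrivial V] (hconn : G.Connected) (w : V) :
    ∃ z, G.Adj w z := by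
  obtain ⟨w', hw'⟩ := exists_ne w
  obtain ⟨q⟩ := hconn.preconnected w w'
  cases q with
  | nil => exact absurd rfl hw'
  | cons h q' => exact ⟨_, h⟩

lemma mem_support_of_eulerian [DecidableEq V] [Nontrivial V] {v : V} {p : G.Walk v v}
    (heul : p.IsEulerian) (hconn : G.Connected) (w : V) : w ∈ p.support := by
  obtain ⟨z, hz⟩ := exists_adj_of_connected hconn w
  have hmem : s(w, z) ∈ G.edgeSet := (G.mem_edgeSet).mpr hz
  have hed : s(w, z) ∈ p.edges := (heul.mem_edges_iff).mpr hmem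
  exact p.fst_mem_support_of_mem_edges hed

lemma walk_support_tail_subset {a : V} {c : G.Walk a a} {S : Set V}
    (hS : ∀ {x y : V}, G.Adj x y → y ∈ S) : ∀ w ∈ c.support.tail, w ∈ S := by
  intro w hw
  rw [← c.map_snd_darts] at hw
  obtain ⟨dd, hd, rfl⟩ := List.mem_map.mp hw
  exact hS dd.adj

end Helpers

section Main

set_option maxHeartbeats 1000000 in
/-- extending a classical MDS code along a closed eulerian trail of a
graph of order n, size m, and girth at least n-d+1 yields an MDS
(m, m-n+d+1)_q symbol-pair code. -/
theorem stmt_6 {σ : Type*} {n d q m : ℕ} (hcard : Nat.card σ = q) (hdn : d < n)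
    (C : Set (ZMod n → σ))
    (hdist : ∀ u ∈ C, ∀ v ∈ C, u ≠ v → d ≤ hamDist u v)
    (hsize : C.ncard = q ^ (n - d + 1))
    (G : SimpleGraph (ZMod n)) (hconn : G.Connected)
    (hm : G.edgeSet.ncard = m)
    (heven : ∀ x, Even ((G.neighborSet x).ncard))
    (hgirth : ((n - d + 1 : ℕ) : ℕ∞) ≤ G.egirth) :
    ∃ C' : Set (ZMod m → σ), C'.ncard = q ^ (n - d + 1) ∧
      ∀ u ∈ C', ∀ v ∈ C', u ≠ v → m - n + d + 1 ≤ pairDist u v := by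
  classical
  haveI : NeZero n := ⟨by omega⟩
  rcases Nat.lt_or_ge q 2 with hq | hq
  · interval_cases q
    · refine ⟨∅, ?_, by simp⟩
      rw [Set.ncard_empty, zero_pow (Nat.succ_ne_zero _)]
    · have hσpos : 0 < Nat.card σ := by omega
      have hσne : Nonempty σ := (Nat.card_pos_iff.mp hσpos).1
      refine ⟨{fun _ => hσne.some}, by simp, ?_⟩
      rintro u hu v hv huv
      rw [Set.mem_singleton_iff] at hu hv
      exact absurd (hu.trans hv.symm) huv
  -- main case
  haveI hσfin : Finite σ := by
    have hσpos : 0 < Nat.card σ := by omega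
    exact (Nat.card_pos_iff.mp hσpos).2
  have hle : C.ncard ≤ q ^ n := by
    have h1 : C.ncard ≤ (Set.univ : Set (ZMod n → σ)).ncard :=
      Set.ncard_le_ncard (Set.subset_univ _) Set.finite_univ
    rw [Set.ncard_univ, Nat.card_fun, hcard, Nat.card_zmod] at h1
    exact h1
  have hd1 : 1 ≤ d := by
    by_contra hcon
    have hd0 : d = 0 := by omega
    rw [hsize, hd0] at hle
    simp only [Nat.sub_zero] at hle
    exact absurd hle (not_le.mpr (Nat.pow_lt_pow_right hq (by omega)))
  have hn2 : 2 ≤ n := by omega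
  haveI : Fact (1 < n) := ⟨by omega⟩
  letI : DecidableRel G.Adj := Classical.decRel _
  obtain ⟨v, p, heul⟩ := exists_eulerian hconn heven
  have hp : p.IsTrail := heul.isTrail
  have hEfin : p.edges.toFinset = G.edgeFinset := by
    ext e
    simp [heul.mem_edges_iff]
  have hplen : p.length = m := by
    rw [← Walk.length_edges, ← List.toFinset_card_of_nodup hp.edges_nodup, hEfin, ← hm]
    simp [Set.ncard_eq_toFinset_card', SimpleGraph.edgeFinset]
  have hcov : ∀ w, w ∈ p.support := mem_support_of_eulerian heul hconn
  have hm1 : 1 ≤ m := by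
    obtain ⟨z, hz⟩ := exists_adj_of_connected hconn v
    have h1 : s(v, z) ∈ G.edgeSet := (G.mem_edgeSet).mpr hz
    have h2 : 0 < G.edgeSet.ncard := (Set.ncard_pos G.edgeSet.toFinite).mpr ⟨_, h1⟩
    omega
  have htaillen : p.support.tail.length = m := by
    rw [List.length_tail, Walk.length_support]
    omega
  have hvtail : ∀ w, w ∈ p.support.tail := by
    intro w
    have hw := hcov w
    rw [p.support_eq_cons] at hw
    rcases List.mem_cons.mp hw with rfl | h
    · have hdne : p.darts ≠ [] := by
        intro hnil
        have hld := p.length_darts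
        rw [hnil] at hld
        simp only [List.length_nil] at hld
        omega
      have hlast : (p.darts.getLast hdne).snd = w := by rw [Walk.getLast_darts_eq_lastDart]; rfl
      have hmem : (p.darts.getLast hdne).snd ∈ p.support.tail := by
        rw [← p.map_snd_darts]
        exact List.mem_map_of_mem (List.getLast_mem hdne)
      rwa [hlast] at hmem
    · exact h
  have hnm : n ≤ m := by
    have hsubtail : (Finset.univ : Finset (ZMod n)) ⊆ p.support.tail.toFinset :=
      fun w _ => List.mem_toFinset.mpr (hvtail w)
    have h1 := Finset.card_le_card hsubtail
    rw [Finset.card_univ, ZMod.card] at h1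
    calc n ≤ p.support.tail.toFinset.card := h1
    _ ≤ p.support.tail.length := p.support.tail.toFinset_card_le
    _ = m := htaillen
  haveI : NeZero m := ⟨by omega⟩
  haveI : Fact (1 < m) := ⟨by omega⟩
  set x : ZMod m → ZMod n := fun i => p.getVert i.val with hxdef
  have hx1 : ∀ i : ZMod m, x (i + 1) = p.getVert (i.val + 1) := by
    intro i
    show p.getVert ((i + 1 : ZMod m)).val = p.getVert (i.val + 1)
    have hval : (i + 1 : ZMod m).val = (i.val + 1) % m := by
      rw [ZMod.val_add, ZMod.val_one]
    rw [hval]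
    rcases Nat.lt_or_ge (i.val + 1) m with h | h
    · rw [Nat.mod_eq_of_lt h]
    · have h2 : i.val + 1 = m := by
        have := ZMod.val_lt i
        omega
      rw [h2, Nat.mod_self, Walk.getVert_zero, show m = p.length from hplen.symm,
        Walk.getVert_length]
  have hadjx : ∀ i : ZMod m, G.Adj (x i) (x (i + 1)) := by
    intro i
    rw [hx1]
    exact p.adj_getVert_succ (by rw [hplen]; exact ZMod.val_lt i)
  have hedge_i : ∀ i : ZMod m,
      p.edges[i.val]'(by rw [Walk.length_edges, hplen]; exact ZMod.val_lt i)
        = s(x i, x (i + 1)) := by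
    intro i
    rw [hx1]
    exact edges_getElem p i.val (by rw [hplen]; exact ZMod.val_lt i)
  set Φ : (ZMod n → σ) → (ZMod m → σ) := fun u i => u (x i) with hΦdef
  have hinj : Set.InjOn Φ C := by
    intro u hu w hw huw
    funext t
    obtain ⟨j, hj1, hj2⟩ := Walk.mem_support_iff_exists_getVert.mp (hcov t)
    rcases Nat.lt_or_ge j m with h | h
    · have hxt : x (j : ZMod m) = t := by
        rw [hxdef]
        simp only
        rw [ZMod.val_natCast, Nat.mod_eq_of_lt h]
        exact hj1
      calc u t = Φ u (j : ZMod m) := by rw [hΦdef]; simp only; rw [hxt]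
      _ = Φ w (j : ZMod m) := by rw [huw]
      _ = w t := by rw [hΦdef]; simp only; rw [hxt]
    · have hj : j = m := by
        rw [hplen] at hj2
        omega
      have hxt : x (0 : ZMod m) = t := by
        rw [hxdef]
        simp only [ZMod.val_zero, Walk.getVert_zero]
        rw [← hj1, hj, show m = p.length from hplen.symm, Walk.getVert_length]
      calc u t = Φ u (0 : ZMod m) := by rw [hΦdef]; simp only; rw [hxt]
      _ = Φ w (0 : ZMod m) := by rw [huw]
      _ = w t := by rw [hΦdef]; simp only; rw [hxt]
  refine ⟨Φ '' C, by rw [Set.ncard_image_of_injOn hinj, hsize], ?_⟩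
  rintro u' ⟨u, hu, rfl⟩ w' ⟨w, hw, rfl⟩ hne
  have hneuw : u ≠ w := fun h => hne (by rw [h])
  have hduw : d ≤ hamDist u w := hdist u hu w hw hneuw
  set S : Finset (ZMod n) := Finset.univ.filter (fun t => u t = w t) with hS
  have hScard : S.card + hamDist u w = n := by
    have h1 : hamDist u w = (Finset.univ.filter (fun t => ¬ u t = w t)).card := by
      simp only [hamDist]
      rw [Set.ncard_eq_toFinset_card']
      congr 1
      ext t
      simp
    rw [h1, hS, Finset.card_filter_add_card_filter_not, Finset.card_univ, ZMod.card]
  have hhamle : hamDist u w ≤ n := by omega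
  have hScard2 : S.card ≤ n - d := by omega
  set H : SimpleGraph (ZMod n) :=
    { Adj := fun a b => G.Adj a b ∧ a ∈ S ∧ b ∈ S
      symm := ⟨fun a b h => ⟨h.1.symm, h.2.2, h.2.1⟩⟩
      loopless := ⟨fun a h => G.loopless.irrefl a h.1⟩ } with hH
  have hleH : H ≤ G := fun a b h => h.1
  have hHsub : ∀ e ∈ H.edgeSet, ∀ y ∈ e, y ∈ S := by
    intro e he y hy
    induction e using Sym2.ind with
    | _ a b =>
      have h1 := (H.mem_edgeSet).mp he
      rcases Sym2.mem_iff.mp hy with rfl | rfl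
      · exact h1.2.1
      · exact h1.2.2
  have hHac : H.IsAcyclic := by
    intro t c hc
    have hcycG : (c.mapLe hleH).IsCycle := hc.mapLe hleH
    have hlen1 := SimpleGraph.le_egirth.mp hgirth _ _ hcycG
    rw [Walk.mapLe, Walk.length_map] at hlen1
    have hlen1' : n - d + 1 ≤ c.length := by exact_mod_cast hlen1
    have htail : ∀ y ∈ c.support.tail, y ∈ S := by
      intro y hy
      have := walk_support_tail_subset (G := H) (S := {a : ZMod n | a ∈ S})
        (fun {a b} hab => hab.2.2) y hy
      exact this
    have hnodup : c.support.tail.Nodup := hc.support_nodup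
    have hlen2 : c.length ≤ S.card := by
      have hsub2 : c.support.tail.toFinset ⊆ S := fun y hy => htail y (List.mem_toFinset.mp hy)
      have h3 := Finset.card_le_card hsub2
      rw [List.toFinset_card_of_nodup hnodup, List.length_tail, Walk.length_support,
        Nat.add_sub_cancel] at h3
      exact h3
    omega
  set A : Finset (ZMod m) := Finset.univ.filter
    (fun i => u (x i) = w (x i) ∧ u (x (i + 1)) = w (x (i + 1))) with hA
  have hxiS : ∀ i ∈ A, x i ∈ S ∧ x (i + 1) ∈ S := by
    intro i hi
    rw [hA, Finset.mem_filter] at hi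
    constructor
    · rw [hS, Finset.mem_filter]
      exact ⟨Finset.mem_univ _, hi.2.1⟩
    · rw [hS, Finset.mem_filter]
      exact ⟨Finset.mem_univ _, hi.2.2⟩
  have hAcard : A.card + 1 ≤ n - d := by
    rcases Finset.eq_empty_or_nonempty S with hSe | hSne
    · have hAe : A = ∅ := by
        refine Finset.eq_empty_of_forall_notMem fun i hi => ?_
        have hxs := (hxiS i hi).1
        rw [hSe] at hxs
        exact absurd hxs (Finset.notMem_empty _)
      rw [hAe, Finset.card_empty]
      omega
    · have hginj : Set.InjOn (fun i => s(x i, x (i + 1))) ↑A := by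
        intro i _ j _ hij
        simp only at hij
        rw [← hedge_i i, ← hedge_i j] at hij
        have hvv : i.val = j.val := by
          have hnd := hp.edges_nodup
          exact (List.Nodup.getElem_inj_iff hnd).mp hij
        exact ZMod.val_injective m hvv
      have hmapsto : ∀ i ∈ A, s(x i, x (i + 1)) ∈ H.edgeSet.toFinset := by
        intro i hi
        rw [Set.mem_toFinset]
        exact (H.mem_edgeSet).mpr ⟨hadjx i, (hxiS i hi).1, (hxiS i hi).2⟩
      have hcard1 : A.card ≤ H.edgeSet.toFinset.card :=
        Finset.card_le_card_of_injOn _ hmapsto hginj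
      have hforest := forest_edge_bound H.edgeSet.ncard H hHac S rfl hHsub hSne
      have hcc : H.edgeSet.toFinset.card = H.edgeSet.ncard :=
        (Set.ncard_eq_toFinset_card' _).symm
      omega
  have hAneg : (Finset.univ.filter
      (fun i : ZMod m => ¬(u (x i) = w (x i) ∧ u (x (i + 1)) = w (x (i + 1))))).card
      = m - A.card := by
    have hsplit := Finset.card_filter_add_card_filter_not
      (s := (Finset.univ : Finset (ZMod m)))
      (p := fun i => u (x i) = w (x i) ∧ u (x (i + 1)) = w (x (i + 1)))
    rw [Finset.card_univ, ZMod.card] at hsplit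
    rw [← hA] at hsplit
    omega
  have hpair : pairDist (Φ u) (Φ w) = m - A.card := by
    simp only [pairDist]
    rw [Set.ncard_eq_toFinset_card']
    rw [← hAneg]
    congr 1
    ext i
    simp only [Set.mem_toFinset, Set.mem_setOf_eq, Finset.mem_filter, Finset.mem_univ,
      true_and, ne_eq, Prod.mk.injEq, not_and, hΦdef]
  rw [hpair]
  omega

end Main
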